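/- For every infinite cardinal κ, the product space D(κ)^{κ⁺} of discrete spaces contains a closed discrete subset of cardinality κ⁺; hence its extent is κ⁺. -/

import Mathlib

open Set Cardinal TopologicalSpace

universe u

/-- Auxiliary function: `auxf e emb d0 a` is a function `I → D` which is "injective below `a`"
and records the position of `a` at coordinates above `a`. -/
private noncomputable def auxf {I D T : Type u} [LinearOrder T]
    (e : I ≃ T) (emb : ∀ x : T, Set.Iio x ↪ D) (d0 : D) (a : T) (b : I) : D :=
  if h : e b < a then emb a ⟨e b, h⟩
  else if h' : a < e b then emb (e b) ⟨a, h'⟩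
  else d0

private theorem auxf_lt {I D T : Type u} [LinearOrder T]
    (e : I ≃ T) (emb : ∀ x : T, Set.Iio x ↪ D) (d0 : D) {a : T} {b : I} (h : e b < a) :
    auxf e emb d0 a b = emb a ⟨e b, h⟩ :=
  dif_pos h

private theorem auxf_gt {I D T : Type u} [LinearOrder T]
    (e : I ≃ T) (emb : ∀ x : T, Set.Iio x ↪ D) (d0 : D) {a : T} {b : I} (h : a < e b) :
    auxf e emb d0 a b = emb (e b) ⟨a, h⟩ := by
  rw [auxf, dif_neg (lt_asymm h), dif_pos h]

/-- For every infinite cardinal `κ`, the product space `D(κ)^{κ⁺}` of discrete spaces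
contains a closed discrete subset of cardinality `κ⁺`; hence its extent (the supremum of
cardinalities of closed discrete subsets) is `κ⁺`. -/
theorem closed_discrete_subset_discrete_power
    (κ : Cardinal.{u}) (hκ : ℵ₀ ≤ κ)
    (I : Type u) (hI : #I = Order.succ κ)
    (D : Type u) [TopologicalSpace D] [DiscreteTopology D] (hD : #D = κ) :
    (∃ C : Set (I → D), IsClosed C ∧ DiscreteTopology ↥C ∧ #↥C = Order.succ κ) ∧
    sSup {c : Cardinal.{u} |
      ∃ C : Set (I → D), IsClosed C ∧ DiscreteTopology ↥C ∧ #↥C = c} = Order.succ κ := by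
  classical
  have hκ' : ℵ₀ ≤ Order.succ κ := hκ.trans (Order.le_succ κ)
  haveI : Infinite I := Cardinal.infinite_iff.mpr (by rw [hI]; exact hκ')
  haveI : Infinite D := Cardinal.infinite_iff.mpr (by rw [hD]; exact hκ)
  set T := (Order.succ κ).ord.ToType with hTdef
  have hT : #T = Order.succ κ := by rw [hTdef]; exact Cardinal.mk_ord_toType _
  obtain ⟨e⟩ : Nonempty (I ≃ T) := Cardinal.eq.mp (hI.trans hT.symm)
  haveI : NoMaxOrder T := Cardinal.noMaxOrder hκ'
  -- injections of initial segments into D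
  have hIio : ∀ x : T, #(Set.Iio x) ≤ #D := by
    intro x
    rw [hD]
    exact Order.lt_succ_iff.mp (Cardinal.mk_Iio_ord_toType x)
  have emb : ∀ x : T, Set.Iio x ↪ D := fun x => ((Cardinal.le_def _ _).mp (hIio x)).some
  obtain ⟨d0⟩ : Nonempty D := inferInstance
  set f : T → I → D := auxf e emb d0 with hfdef
  have hflt : ∀ {a : T} {b : I} (h : e b < a), f a b = emb a ⟨e b, h⟩ :=
    fun h => auxf_lt e emb d0 h
  have hfgt : ∀ {a : T} {b : I} (h : a < e b), f a b = emb (e b) ⟨a, h⟩ :=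
    fun h => auxf_gt e emb d0 h
  -- injectivity of f
  have hfinj : Function.Injective f := by
    have key : ∀ a a' : T, a < a' → f a ≠ f a' := by
      intro a a' hlt hff
      obtain ⟨δ, hδ⟩ := exists_gt a'
      have hd : a' < e (e.symm δ) := by rwa [e.apply_symm_apply]
      have h1 : f a (e.symm δ) = emb (e (e.symm δ)) ⟨a, hlt.trans hd⟩ :=
        hfgt (hlt.trans hd)
      have h2 : f a' (e.symm δ) = emb (e (e.symm δ)) ⟨a', hd⟩ := hfgt hd
      rw [hff, h2] at h1
      have := congrArg Subtype.val ((emb _).injective h1)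
      exact absurd this (ne_of_lt hlt).symm
    intro a a' hff
    rcases lt_trichotomy a a' with h | h | h
    · exact absurd hff (key a a' h)
    · exact h
    · exact absurd hff.symm (key a' a h)
  set C : Set (I → D) := Set.range f with hCdef
  -- every g : I → D is non-injective
  have hnoninj : ∀ g : I → D, ¬ Function.Injective g := by
    intro g hg
    have : #I ≤ #D := Cardinal.mk_le_of_injective hg
    rw [hI, hD] at this
    exact absurd this (not_le.mpr (Order.lt_succ κ))
  -- key isolation lemma
  have hkey : ∀ g : I → D, ∃ U : Set (I → D),
      IsOpen U ∧ g ∈ U ∧ ∀ a a' : T, f a ∈ U → f a' ∈ U → a = a' := by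
    intro g
    obtain ⟨β, γ, hlt, hgeq⟩ : ∃ β γ : I, e β < e γ ∧ g β = g γ := by
      obtain ⟨β, γ, hgeq, hne'⟩ := Function.not_injective_iff.mp (hnoninj g)
      rcases lt_trichotomy (e β) (e γ) with h | h | h
      · exact ⟨β, γ, h, hgeq⟩
      · exact absurd (e.injective h) hne'
      · exact ⟨γ, β, h, hgeq.symm⟩
    obtain ⟨δ, hδ⟩ := exists_gt (e γ)
    set d : I := e.symm δ with hddef
    have hd : e γ < e d := by rw [hddef, e.apply_symm_apply]; exact hδ
    refine ⟨(((fun h : I → D => h β) ⁻¹' {g β}) ∩ ((fun h : I → D => h γ) ⁻¹' {g γ})) ∩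
        ((fun h : I → D => h d) ⁻¹' {g d}), ?_, ⟨⟨rfl, rfl⟩, rfl⟩, ?_⟩
    · exact (((isOpen_discrete _).preimage (continuous_apply β)).inter
        ((isOpen_discrete _).preimage (continuous_apply γ))).inter
        ((isOpen_discrete _).preimage (continuous_apply d))
    · have claim : ∀ a : T, f a ∈ (((fun h : I → D => h β) ⁻¹' {g β}) ∩
          ((fun h : I → D => h γ) ⁻¹' {g γ})) ∩ ((fun h : I → D => h d) ⁻¹' {g d}) →
          ∃ h : a < e d, emb (e d) ⟨a, h⟩ = g d := by
        rintro a ⟨⟨h1, h2⟩, h3⟩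
        simp only [Set.mem_preimage, Set.mem_singleton_iff] at h1 h2 h3
        have haγ : ¬ e γ < a := by
          intro hh
          have hβa : e β < a := hlt.trans hh
          have e1 : f a β = emb a ⟨e β, hβa⟩ := hflt hβa
          have e2 : f a γ = emb a ⟨e γ, hh⟩ := hflt hh
          have : emb a ⟨e β, hβa⟩ = emb a ⟨e γ, hh⟩ := by
            rw [← e1, ← e2, h1, h2, hgeq]
          exact absurd (congrArg Subtype.val ((emb a).injective this)) (ne_of_lt hlt)
        have haδ : a < e d := lt_of_le_of_lt (not_lt.mp haγ) hd
        refine ⟨haδ, ?_⟩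
        rw [← h3, hfgt haδ]
      intro a a' ha ha'
      obtain ⟨w1, hw1⟩ := claim a ha
      obtain ⟨w2, hw2⟩ := claim a' ha'
      rw [← hw2] at hw1
      exact congrArg Subtype.val ((emb _).injective hw1)
  -- C is closed
  have hclosed : IsClosed C := by
    rw [← isOpen_compl_iff]
    rw [isOpen_iff_forall_mem_open]
    intro g hg
    obtain ⟨U, hUo, hgU, hUuniq⟩ := hkey g
    by_cases hex : ∃ a : T, f a ∈ U
    · obtain ⟨a₀, ha₀⟩ := hex
      have hne' : f a₀ ≠ g := fun h => hg ⟨a₀, h⟩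
      obtain ⟨w, hw⟩ := Function.ne_iff.mp hne'
      refine ⟨U ∩ ((fun h : I → D => h w) ⁻¹' {g w}), ?_, ?_, hgU, rfl⟩
      · rintro h ⟨hhU, hhw⟩ ⟨a, rfl⟩
        have : a = a₀ := hUuniq a a₀ hhU ha₀
        rw [this] at hhw
        exact hw hhw
      · exact hUo.inter ((isOpen_discrete _).preimage (continuous_apply w))
    · refine ⟨U, ?_, hUo, hgU⟩
      rintro h hhU ⟨a, rfl⟩
      exact hex ⟨a, hhU⟩
  -- C is discrete
  have hdis : DiscreteTopology ↥C := by
    rw [discreteTopology_iff_isOpen_singleton]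
    rintro ⟨g, hgC⟩
    obtain ⟨U, hUo, hgU, hUuniq⟩ := hkey g
    have : {(⟨g, hgC⟩ : ↥C)} = Subtype.val ⁻¹' U := by
      apply Set.eq_of_subset_of_subset
      · rintro y hy
        rw [Set.mem_singleton_iff] at hy
        rw [hy]
        exact hgU
      · rintro ⟨y, hyC⟩ hy
        obtain ⟨a, rfl⟩ := hyC
        obtain ⟨a₀, rfl⟩ := hgC
        have : a = a₀ := hUuniq a a₀ hy hgU
        simp [this]
    rw [this]
    exact hUo.preimage continuous_subtype_val
  -- cardinality of C
  have hcard : #↥C = Order.succ κ := by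
    rw [hCdef, Cardinal.mk_range_eq f hfinj, hT]
  -- upper bound: every closed discrete subset has cardinality at most κ⁺
  have hub : ∀ c ∈ {c : Cardinal.{u} |
      ∃ C : Set (I → D), IsClosed C ∧ DiscreteTopology ↥C ∧ #↥C = c}, c ≤ Order.succ κ := by
    rintro c ⟨B, _hBcl, hBdis, rfl⟩
    have key : ∀ x : ↥B, ∃ s : Finset (I × D),
        (∀ p ∈ s, x.val p.1 = p.2) ∧ ∀ y : ↥B, (∀ p ∈ s, y.val p.1 = p.2) → y = x := by
      intro x
      have hopen : IsOpen ({x} : Set ↥B) := isOpen_discrete _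
      obtain ⟨t, hto, htx⟩ := isOpen_induced_iff.mp hopen
      have hxt : x.val ∈ t := by
        have : x ∈ Subtype.val ⁻¹' t := by rw [htx]; exact rfl
        exact this
      obtain ⟨F, u, h1, h2⟩ := isOpen_pi_iff.mp hto x.val hxt
      refine ⟨F.image (fun i => (i, x.val i)), ?_, ?_⟩
      · intro p hp
        obtain ⟨i, _, rfl⟩ := Finset.mem_image.mp hp
        rfl
      · intro y hy
        have hyt : y.val ∈ t := by
          apply h2
          intro i hiF
          have hmem : (i, x.val i) ∈ F.image (fun i => (i, x.val i)) :=
            Finset.mem_image_of_mem _ hiF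
          have := hy _ hmem
          rw [this]
          exact (h1 i hiF).2
        have : y ∈ Subtype.val ⁻¹' t := hyt
        rw [htx] at this
        exact this
    choose Φ hΦ1 hΦ2 using key
    have hΦinj : Function.Injective Φ := by
      intro x y hxy
      refine hΦ2 y x ?_
      intro p hp
      rw [← hxy] at hp
      exact hΦ1 x p hp
    calc #↥B ≤ #(Finset (I × D)) := Cardinal.mk_le_of_injective hΦinj
      _ = #(I × D) := Cardinal.mk_finset_of_infinite _
      _ = #I * #D := by rw [Cardinal.mk_prod, Cardinal.lift_id, Cardinal.lift_id]
      _ = Order.succ κ * κ := by rw [hI, hD]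
      _ = Order.succ κ := Cardinal.mul_eq_left hκ' (Order.le_succ κ)
            (by exact (aleph0_pos.trans_le hκ).ne')
  refine ⟨⟨C, hclosed, hdis, hcard⟩, ?_⟩
  exact IsGreatest.csSup_eq ⟨⟨C, hclosed, hdis, hcard⟩, hub⟩
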